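/- Sufficiency via maximized Hamiltonian concavity implies the Hamiltonian inequality: let H : Ω × U → ℝ, ū ∈ U, x̄ ∈ Ω with Ω open convex in a Banach space E, and suppose H*(ξ) := max_{ζ∈U} H(ξ,ζ) exists for all ξ ∈ Ω, H* is concave at x̄ and Gâteaux differentiable at x̄, H(x̄,ū) = H*(x̄) (the maximum principle at x̄), and H(·,ū) is Gâteaux differentiable at x̄. Then for all ξ ∈ Ω and ζ ∈ U: H(x̄,ū) − H(ξ,ζ) ≥ −D_G H*(x̄)·(ξ−x̄), and moreover D_G H*(x̄) = D_G H(·,ū)(x̄). -/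

import Mathlib

open Filter Set

/-- Gâteaux differentiability of `g` at `x` with differential `L`. -/
def GateauxDiffAt {X : Type*} [NormedAddCommGroup X] [NormedSpace ℝ X]
    (g : X → ℝ) (x : X) (L : X →L[ℝ] ℝ) : Prop :=
  ∀ h : X, Tendsto (fun t : ℝ => t⁻¹ • (g (x + t • h) - g x))
    (nhdsWithin 0 (Set.Ioi 0)) (nhds (L h))

/-- `g` is concave at the point `x` relative to `G`. -/
def ConcaveAtPt {X : Type*} [NormedAddCommGroup X] [NormedSpace ℝ X]
    (g : X → ℝ) (G : Set X) (x : X) : Prop :=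
  ∀ y ∈ G, ∀ t : ℝ, t ∈ Set.Icc (0:ℝ) 1 → (1 - t) • x + t • y ∈ G →
    (1 - t) * g x + t * g y ≤ g ((1 - t) • x + t • y)

/-- if the maximized Hamiltonian `H*(ξ) = max_{ζ∈U} H(ξ,ζ)` exists
on `Ω`, is concave at `x̄` and Gâteaux differentiable at `x̄` with differential
`Lstar`, the maximum principle `H(x̄,ū) = H*(x̄)` holds and `H(·,ū)` is Gâteaux
differentiable at `x̄` with differential `L`, then for all `ξ ∈ Ω`, `ζ ∈ U`:
`H(x̄,ū) − H(ξ,ζ) ≥ −D_G H*(x̄)·(ξ−x̄)`, and `Lstar = L`. -/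
theorem maximized_hamiltonian_inequality
    {E U : Type*} [NormedAddCommGroup E] [NormedSpace ℝ E] [CompleteSpace E]
    (Ω : Set E) (hΩo : IsOpen Ω) (hΩc : Convex ℝ Ω) (hΩne : Ω.Nonempty)
    (H : E → U → ℝ) (Hstar : E → ℝ) (xbar : E) (hxbar : xbar ∈ Ω) (ubar : U)
    (hmaxex : ∀ ξ ∈ Ω, (∃ ζ : U, Hstar ξ = H ξ ζ) ∧ ∀ ζ : U, H ξ ζ ≤ Hstar ξ)
    (hconc : ConcaveAtPt Hstar Ω xbar)
    (Lstar : E →L[ℝ] ℝ) (hGstar : GateauxDiffAt Hstar xbar Lstar)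
    (hMP : H xbar ubar = Hstar xbar)
    (L : E →L[ℝ] ℝ) (hGH : GateauxDiffAt (fun ξ => H ξ ubar) xbar L) :
    (∀ ξ ∈ Ω, ∀ ζ : U, -(Lstar (ξ - xbar)) ≤ H xbar ubar - H ξ ζ) ∧ Lstar = L := by
  -- Part 2 helper: for any h, L h ≤ Lstar h
  have key : ∀ h : E, L h ≤ Lstar h := by
    intro h
    have hev : ∀ᶠ t in nhdsWithin (0:ℝ) (Set.Ioi 0),
        t⁻¹ • ((fun ξ => H ξ ubar) (xbar + t • h) - H xbar ubar)
          ≤ t⁻¹ • (Hstar (xbar + t • h) - Hstar xbar) := by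
      have hcont : ContinuousAt (fun t : ℝ => xbar + t • h) 0 := by
        fun_prop
      have hm : ∀ᶠ t in nhds (0:ℝ), xbar + t • h ∈ Ω := by
        have := hcont (hΩo.mem_nhds (by simpa using hxbar))
        exact this
      filter_upwards [nhdsWithin_le_nhds hm, self_mem_nhdsWithin] with t hmem ht
      have ht' : (0:ℝ) < t := ht
      have h1 : H (xbar + t • h) ubar ≤ Hstar (xbar + t • h) :=
        (hmaxex _ hmem).2 ubar
      have : H (xbar + t • h) ubar - H xbar ubar
          ≤ Hstar (xbar + t • h) - Hstar xbar := by
        rw [hMP]; linarith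
      simpa [smul_eq_mul] using
        mul_le_mul_of_nonneg_left this (le_of_lt (inv_pos.mpr ht'))
    exact le_of_tendsto_of_tendsto (hGH h) (hGstar h) hev
  have hLeq : Lstar = L := by
    ext h
    refine le_antisymm ?_ (key h)
    have := key (-h)
    simp only [map_neg] at this
    linarith
  refine ⟨?_, hLeq⟩
  intro ξ hξ ζ
  -- concavity gives Hstar ξ - Hstar xbar ≤ Lstar (ξ - xbar)
  have hst : Hstar ξ - Hstar xbar ≤ Lstar (ξ - xbar) := by
    have hev : ∀ᶠ t in nhdsWithin (0:ℝ) (Set.Ioi 0),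
        Hstar ξ - Hstar xbar ≤ t⁻¹ • (Hstar (xbar + t • (ξ - xbar)) - Hstar xbar) := by
      filter_upwards [Ioo_mem_nhdsGT_of_mem (by norm_num : (0:ℝ) ∈ Set.Ico 0 1),
        self_mem_nhdsWithin] with t htIoo ht
      have ht0 : (0:ℝ) < t := htIoo.1
      have ht1 : t < 1 := htIoo.2
      have hpt : (1 - t) • xbar + t • ξ ∈ Ω :=
        hΩc hxbar hξ (by linarith) (le_of_lt ht0) (by ring)
      have hc := hconc ξ hξ t ⟨le_of_lt ht0, le_of_lt ht1⟩ hpt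
      have heq : xbar + t • (ξ - xbar) = (1 - t) • xbar + t • ξ := by
        simp [smul_sub, sub_smul]; abel
      rw [heq, smul_eq_mul]
      have : t * (Hstar ξ - Hstar xbar) ≤ Hstar ((1 - t) • xbar + t • ξ) - Hstar xbar := by
        nlinarith [hc]
      calc Hstar ξ - Hstar xbar
          = t⁻¹ * (t * (Hstar ξ - Hstar xbar)) := by field_simp
        _ ≤ t⁻¹ * (Hstar ((1 - t) • xbar + t • ξ) - Hstar xbar) :=
            mul_le_mul_of_nonneg_left this (le_of_lt (inv_pos.mpr ht0))
    exact ge_of_tendsto (hGstar (ξ - xbar)) hev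
  have hHle : H ξ ζ ≤ Hstar ξ := (hmaxex ξ hξ).2 ζ
  rw [hMP]
  linarith
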